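/- Let P and P̃ be monic hyperbolic real polynomials of degree n with roots x₁ ≤ … ≤ xₙ and x̃₁ ≤ … ≤ x̃ₙ respectively (listed in increasing order with multiplicity). Suppose x_i ≤ x̃_i for all i. Then for every k with 1 ≤ k ≤ n−1 and every j with 1 ≤ j ≤ n−k, the j-th roots in increasing order (with multiplicity) ξ_j of P^{(k)} and ξ̃_j of P̃^{(k)} satisfy ξ_j ≤ ξ̃_j. -/

import Mathlib

open Polynomial



open Polynomial Multiset

namespace RootsMono

noncomputable section
open Classical

/-- product of `X - C a` over a multiset of roots -/
noncomputable def pp (A : Multiset ℝ) : ℝ[X] := (A.map fun a => X - C a).prod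

lemma pp_monic (A : Multiset ℝ) : (pp A).Monic :=
  monic_multiset_prod_of_monic _ _ fun a _ => monic_X_sub_C a

lemma pp_ne_zero (A : Multiset ℝ) : pp A ≠ 0 := (pp_monic A).ne_zero

lemma pp_roots (A : Multiset ℝ) : (pp A).roots = A := roots_multiset_prod_X_sub_C A

lemma pp_natDegree (A : Multiset ℝ) : (pp A).natDegree = Multiset.card A := by
  refine le_antisymm ?_ ?_
  · calc (pp A).natDegree ≤ ((A.map fun a => X - C a).map natDegree).sum :=
          natDegree_multiset_prod_le _
      _ = Multiset.card A := by
          rw [Multiset.map_map]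
          simp [Function.comp, natDegree_X_sub_C, Multiset.map_const',
            Multiset.sum_replicate]
  · calc Multiset.card A = Multiset.card (pp A).roots := by rw [pp_roots]
      _ ≤ (pp A).natDegree := (pp A).card_roots'

lemma pp_cons (a : ℝ) (A : Multiset ℝ) : pp (a ::ₘ A) = (X - C a) * pp A := by
  simp [pp]

lemma pp_eval (A : Multiset ℝ) (c : ℝ) :
    (pp A).eval c = (A.map fun a => c - a).prod := by
  rw [pp, eval_multiset_prod, Multiset.map_map]
  simp [Function.comp]

/-- sign lemma: at a non-root `c`, the sign of `pp A` at `c` is `(-1)^(#roots > c)`. -/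
lemma pp_sign (A : Multiset ℝ) (c : ℝ) (hc : c ∉ A) :
    0 < (-1 : ℝ) ^ (Multiset.card (A.filter fun x => c < x)) * (pp A).eval c := by
  induction A using Multiset.induction_on with
  | empty => simp [pp]
  | cons a A ih =>
    have hca : c ≠ a := fun h => hc (h ▸ Multiset.mem_cons_self a A)
    have hc' : c ∉ A := fun h => hc (Multiset.mem_cons_of_mem h)
    have h0 := ih hc'
    rw [pp_cons, eval_mul, eval_sub, eval_X, eval_C]
    rcases lt_or_gt_of_ne hca with h | h
    · rw [Multiset.filter_cons_of_pos _ h]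
      have : (-1 : ℝ) ^ (Multiset.card (a ::ₘ A.filter fun x => c < x))
          = -(-1 : ℝ) ^ (Multiset.card (A.filter fun x => c < x)) := by
        rw [Multiset.card_cons, pow_succ]
        ring
      rw [this]
      nlinarith
    · rw [Multiset.filter_cons_of_neg _ (by simpa using h.le)]
      nlinarith

end

end RootsMono

namespace RootsMono
noncomputable section
open Classical

/-- Rolle-type estimate restricted to a "convex" predicate. -/
lemma filtered_rolle (p : ℝ[X]) (pr : ℝ → Prop) [DecidablePred pr]
    (hconv : ∀ a z b : ℝ, pr a → pr b → a ≤ z → z ≤ b → pr z) :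
    Multiset.card (p.roots.filter pr) ≤
      Multiset.card ((derivative p).roots.filter pr) + 1 := by
  rcases eq_or_ne (derivative p) 0 with hp' | hp'
  · rw [eq_C_of_derivative_eq_zero hp']
    simp
  have hp : p ≠ 0 := ne_of_apply_ne derivative (by rwa [derivative_zero])
  set m := p.roots.filter pr with hm
  set m' := (derivative p).roots.filter pr with hm'
  have hfin : m.toFinset.card ≤ (m'.toFinset \ m.toFinset).card + 1 := by
    refine Finset.card_le_diff_of_interleaved fun x hx y hy hxy hxy' => ?_
    rw [Multiset.mem_toFinset, hm, Multiset.mem_filter, mem_roots hp] at hx hy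
    obtain ⟨z, hz1, hz2⟩ := exists_deriv_eq_zero hxy p.continuousOn (hx.1.trans hy.1.symm)
    refine ⟨z, ?_, hz1⟩
    rw [Multiset.mem_toFinset, hm', Multiset.mem_filter, mem_roots hp']
    refine ⟨?_, hconv x z y hx.2 hy.2 hz1.1.le hz1.2.le⟩
    rw [IsRoot, ← p.deriv]; exact hz2
  have hcount : ∀ x ∈ m.toFinset, m.count x = p.roots.count x := by
    intro x hx
    have hprx : pr x := (Multiset.mem_filter.1 (Multiset.mem_toFinset.1 hx)).2
    rw [hm, Multiset.count_filter, if_pos hprx]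
  have hcount' : ∀ x : ℝ, pr x → m'.count x = (derivative p).roots.count x := by
    intro x hx
    rw [hm', Multiset.count_filter, if_pos hx]
  calc Multiset.card m = ∑ x ∈ m.toFinset, m.count x := (Multiset.toFinset_sum_count_eq _).symm
    _ = ∑ x ∈ m.toFinset, (m.count x - 1 + 1) :=
        (Finset.sum_congr rfl fun x hx => (tsub_add_cancel_of_le <|
          Nat.succ_le_iff.2 <| Multiset.count_pos.2 <| Multiset.mem_toFinset.1 hx).symm)
    _ = (∑ x ∈ m.toFinset, (m.count x - 1)) + m.toFinset.card := by
        simp only [Finset.sum_add_distrib, Finset.card_eq_sum_ones]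
    _ ≤ (∑ x ∈ m.toFinset, m'.count x) + ((m'.toFinset \ m.toFinset).card + 1) := by
        refine add_le_add (Finset.sum_le_sum fun x hx => ?_) hfin
        have hprx : pr x := (Multiset.mem_filter.1 (Multiset.mem_toFinset.1 hx)).2
        rw [hcount x hx, hcount' x hprx, count_roots, count_roots]
        exact rootMultiplicity_sub_one_le_derivative_rootMultiplicity _ _
    _ ≤ (∑ x ∈ m.toFinset, m'.count x) +
          ((∑ x ∈ m'.toFinset \ m.toFinset, m'.count x) + 1) := by
        refine add_le_add_right (add_le_add_left ((Finset.card_eq_sum_ones _).trans_le ?_) _) _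
        refine Finset.sum_le_sum fun x hx => Nat.succ_le_iff.2 <| Multiset.count_pos.2 ?_
        exact Multiset.mem_toFinset.1 (Finset.mem_sdiff.1 hx).1
    _ = Multiset.card m' + 1 := by
        rw [← add_assoc, ← Finset.sum_union Finset.disjoint_sdiff,
          Finset.union_sdiff_self_eq_union, ← Multiset.toFinset_sum_count_eq,
          ← Finset.sum_subset Finset.subset_union_right]
        intro x _ hx₂
        simpa only [Multiset.mem_toFinset, Multiset.count_eq_zero] using hx₂

end
end RootsMono

namespace RootsMono
noncomputable section
open Classical

lemma filter_le_add_filter_gt (A : Multiset ℝ) (c : ℝ) :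
    Multiset.card (A.filter fun x => x ≤ c) + Multiset.card (A.filter fun x => c < x)
      = Multiset.card A := by
  rw [← Multiset.card_add]
  congr 1
  have : (A.filter fun x => c < x) = (A.filter fun x => ¬ x ≤ c) :=
    Multiset.filter_congr (fun x _ => by simp [not_le])
  rw [this, Multiset.filter_add_not]

lemma card_roots_deriv_pp (A : Multiset ℝ) (hA : 1 ≤ Multiset.card A) :
    Multiset.card (derivative (pp A)).roots = Multiset.card A - 1 ∧
      (derivative (pp A)).natDegree = Multiset.card A - 1 := by
  have h1 : Multiset.card (pp A).roots ≤ Multiset.card (derivative (pp A)).roots + 1 :=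
    card_roots_le_derivative _
  rw [pp_roots] at h1
  have h2 : (derivative (pp A)).natDegree < (pp A).natDegree :=
    natDegree_derivative_lt (by rw [pp_natDegree]; omega)
  rw [pp_natDegree] at h2
  have h3 : Multiset.card (derivative (pp A)).roots ≤ (derivative (pp A)).natDegree :=
    card_roots' _
  omega

lemma leadingCoeff_deriv_pp (A : Multiset ℝ) (hA : 1 ≤ Multiset.card A) :
    (derivative (pp A)).leadingCoeff = (Multiset.card A : ℝ) := by
  have hnd := (card_roots_deriv_pp A hA).2
  rw [leadingCoeff, hnd, coeff_derivative]
  have : Multiset.card A - 1 + 1 = Multiset.card A := by omega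
  rw [this, ← pp_natDegree A, (pp_monic A).coeff_natDegree, one_mul, pp_natDegree]
  exact_mod_cast congrArg (Nat.cast : ℕ → ℝ) this

lemma deriv_pp_eq (A : Multiset ℝ) (hA : 1 ≤ Multiset.card A) :
    derivative (pp A) = C (Multiset.card A : ℝ) * pp (derivative (pp A)).roots := by
  have h := C_leadingCoeff_mul_prod_multiset_X_sub_C
    (p := derivative (pp A))
    (by rw [(card_roots_deriv_pp A hA).1, (card_roots_deriv_pp A hA).2])
  rw [← leadingCoeff_deriv_pp A hA]
  exact h.symm

/-- number of roots `≤ c` counted with multiplicity -/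
def N (f : ℝ[X]) (c : ℝ) : ℕ := Multiset.card (f.roots.filter fun x => x ≤ c)

lemma N_deriv_ge (A : Multiset ℝ) (c : ℝ) :
    Multiset.card (A.filter fun x => x ≤ c) ≤ N (derivative (pp A)) c + 1 := by
  have := filtered_rolle (pp A) (fun x => x ≤ c)
    (fun a z b _ hb _ hzb => le_trans hzb hb)
  rwa [pp_roots] at this

lemma N_deriv_le (A : Multiset ℝ) (c : ℝ) :
    N (derivative (pp A)) c ≤ Multiset.card (A.filter fun x => x ≤ c) := by
  rcases Nat.eq_zero_or_pos (Multiset.card A) with h0 | h0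
  · have : A = 0 := Multiset.card_eq_zero.1 h0
    subst this
    simp only [pp, Multiset.map_zero, Multiset.prod_zero]
    simp [N]
  have hgt := filtered_rolle (pp A) (fun x => c < x)
    (fun a z b ha _ haz _ => lt_of_lt_of_le ha haz)
  rw [pp_roots] at hgt
  have h1 := filter_le_add_filter_gt A c
  have h2 := filter_le_add_filter_gt (derivative (pp A)).roots c
  have h3 := (card_roots_deriv_pp A h0).1
  unfold N
  omega

end
end RootsMono

namespace RootsMono
noncomputable section
open Classical

lemma N_le_card (f : ℝ[X]) (c : ℝ) : N f c ≤ Multiset.card f.roots :=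
  Multiset.card_le_card (Multiset.filter_le _ _)

lemma sign_deriv_pp (A : Multiset ℝ) (hA : 1 ≤ Multiset.card A) (c : ℝ)
    (hc : c ∉ (derivative (pp A)).roots) :
    0 < (-1 : ℝ) ^ (Multiset.card A - 1 - N (derivative (pp A)) c) *
      (derivative (pp A)).eval c := by
  have heq := deriv_pp_eq A hA
  have hcard := (card_roots_deriv_pp A hA).1
  have hs := pp_sign (derivative (pp A)).roots c hc
  have hpart := filter_le_add_filter_gt (derivative (pp A)).roots c
  have hNc : N (derivative (pp A)) c ≤ Multiset.card (derivative (pp A)).roots :=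
    N_le_card _ _
  have hexp : Multiset.card ((derivative (pp A)).roots.filter fun x => c < x)
      = Multiset.card A - 1 - N (derivative (pp A)) c := by
    unfold N at *; omega
  rw [hexp] at hs
  have heval : (derivative (pp A)).eval c
      = (Multiset.card A : ℝ) * (pp (derivative (pp A)).roots).eval c := by
    conv_lhs => rw [heq]
    simp [eval_mul]
  rw [heval]
  have hn : (0 : ℝ) < (Multiset.card A : ℝ) := by exact_mod_cast hA
  calc (0:ℝ) < (Multiset.card A : ℝ) *
      ((-1 : ℝ) ^ (Multiset.card A - 1 - N (derivative (pp A)) c) *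
        (pp (derivative (pp A)).roots).eval c) := mul_pos hn hs
    _ = _ := by ring

lemma arith1 (u v α β : ℝ) (hu : 0 < u) (hβ : 0 ≤ β) (hαβ : β ≤ α)
    (h1 : 0 < u + α * v) (h2 : u + β * v < 0) : False := by
  rcases le_or_gt 0 v with hv | hv
  · nlinarith [mul_nonneg hβ hv]
  · nlinarith [mul_le_mul_of_nonpos_right hαβ hv.le]

lemma arith2 (u v a b : ℝ) (hu : 0 < u) (ha : a < 0) (hba : b ≤ a)
    (h1 : u + a * v < 0) (h2 : 0 < u + b * v) : False := by
  rcases le_or_gt v 0 with hv | hv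
  · nlinarith [mul_nonneg (neg_nonneg.2 ha.le) (neg_nonneg.2 hv)]
  · nlinarith [mul_le_mul_of_nonneg_right hba hv.le]

end
end RootsMono

namespace RootsMono
noncomputable section
open Classical

lemma pow_succ_neg_one (k : ℕ) (x : ℝ) : (-1 : ℝ) ^ (k + 1) * x = -((-1 : ℝ) ^ k * x) := by
  rw [pow_succ]; ring

lemma single_step (m : Multiset ℝ) (s t c : ℝ) (hst : s ≤ t) :
    N (derivative (pp (t ::ₘ m))) c ≤ N (derivative (pp (s ::ₘ m))) c := by
  by_contra hcon
  push_neg at hcon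
  have hcards : Multiset.card (s ::ₘ m) = Multiset.card m + 1 := by simp
  have hcardt : Multiset.card (t ::ₘ m) = Multiset.card m + 1 := by simp
  have hProots : Multiset.card (derivative (pp (s ::ₘ m))).roots = Multiset.card m := by
    have := (card_roots_deriv_pp (s ::ₘ m) (by simp)).1
    omega
  have hQroots : Multiset.card (derivative (pp (t ::ₘ m))).roots = Multiset.card m := by
    have := (card_roots_deriv_pp (t ::ₘ m) (by simp)).1
    omega
  have hm1 : 1 ≤ Multiset.card m := by
    by_contra h0
    have h0' : Multiset.card m = 0 := by omega
    have : N (derivative (pp (t ::ₘ m))) c = 0 := by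
      have := N_le_card (derivative (pp (t ::ₘ m))) c
      omega
    omega
  -- choose a generic point c' > c with the same root counts
  set S : Multiset ℝ := (derivative (pp (s ::ₘ m))).roots + (derivative (pp (t ::ₘ m))).roots
      + (derivative (pp m)).roots + m with hS
  obtain ⟨c', hcc', hgood⟩ : ∃ c', c < c' ∧ ∀ x ∈ S, (x ≤ c ↔ x ≤ c') ∧ x ≠ c' := by
    by_cases hT : (S.filter fun x => c < x) = 0
    · refine ⟨c + 1, by linarith, fun x hx => ?_⟩
      have hxc : x ≤ c := by
        by_contra hxc
        have : x ∈ S.filter fun x => c < x := Multiset.mem_filter.2 ⟨hx, not_le.1 hxc⟩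
        rw [hT] at this
        exact absurd this (Multiset.notMem_zero x)
      exact ⟨⟨fun _ => by linarith, fun _ => hxc⟩, fun h => by rw [h] at hxc; linarith⟩
    · have hne : (S.filter fun x => c < x).toFinset.Nonempty := by
        obtain ⟨x, hx⟩ := Multiset.exists_mem_of_ne_zero hT
        exact ⟨x, Multiset.mem_toFinset.2 hx⟩
      set μ := (S.filter fun x => c < x).toFinset.min' hne with hμ
      have hμmem : μ ∈ S.filter fun x => c < x :=
        Multiset.mem_toFinset.1 ((S.filter fun x => c < x).toFinset.min'_mem hne)
      have hcμ : c < μ := (Multiset.mem_filter.1 hμmem).2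
      refine ⟨(c + μ) / 2, by linarith, fun x hx => ?_⟩
      rcases le_or_gt x c with hxc | hxc
      · exact ⟨⟨fun _ => by linarith, fun _ => hxc⟩, fun h => by rw [h] at hxc; linarith⟩
      · have hμx : μ ≤ x := Finset.min'_le _ x
          (Multiset.mem_toFinset.2 (Multiset.mem_filter.2 ⟨hx, hxc⟩))
        refine ⟨⟨fun h => by linarith, fun h => by linarith⟩, fun h => by rw [h] at hμx; linarith⟩
  -- transfer counts to c'
  have congrN : ∀ B : Multiset ℝ, (∀ x ∈ B, x ∈ S) →
      Multiset.card (B.filter fun x => x ≤ c') = Multiset.card (B.filter fun x => x ≤ c)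
        ∧ c' ∉ B := by
    intro B hB
    constructor
    · congr 1
      exact Multiset.filter_congr fun x hx => ((hgood x (hB x hx)).1).symm
    · intro hc'
      exact (hgood c' (hB c' hc')).2 rfl
  have hmemP : ∀ x ∈ (derivative (pp (s ::ₘ m))).roots, x ∈ S := by
    intro x hx; rw [hS]; exact Multiset.mem_add.2 (Or.inl (Multiset.mem_add.2 (Or.inl
      (Multiset.mem_add.2 (Or.inl hx)))))
  have hmemQ : ∀ x ∈ (derivative (pp (t ::ₘ m))).roots, x ∈ S := by
    intro x hx; rw [hS]; exact Multiset.mem_add.2 (Or.inl (Multiset.mem_add.2 (Or.inl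
      (Multiset.mem_add.2 (Or.inr hx)))))
  have hmemR : ∀ x ∈ (derivative (pp m)).roots, x ∈ S := by
    intro x hx; rw [hS]; exact Multiset.mem_add.2 (Or.inl (Multiset.mem_add.2 (Or.inr hx)))
  have hmemm : ∀ x ∈ m, x ∈ S := by
    intro x hx; rw [hS]; exact Multiset.mem_add.2 (Or.inr hx)
  obtain ⟨hNPc, hc'P⟩ := congrN _ hmemP
  obtain ⟨hNQc, hc'Q⟩ := congrN _ hmemQ
  obtain ⟨-, hc'R⟩ := congrN _ hmemR
  obtain ⟨-, hc'm⟩ := congrN _ hmemm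
  have hcon' : N (derivative (pp (s ::ₘ m))) c' < N (derivative (pp (t ::ₘ m))) c' := by
    unfold N
    rw [hNPc, hNQc]
    exact hcon
  clear hcon hNPc hNQc hgood hcc'
  -- counting at c'
  set r := Multiset.card (m.filter fun x => x ≤ c') with hr
  have hrm : r ≤ Multiset.card m := Multiset.card_le_card (Multiset.filter_le _ _)
  have hFP1 := N_deriv_ge (s ::ₘ m) c'
  have hFP2 := N_deriv_le (s ::ₘ m) c'
  have hFQ1 := N_deriv_ge (t ::ₘ m) c'
  have hFQ2 := N_deriv_le (t ::ₘ m) c'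
  have hNPle := N_le_card (derivative (pp (s ::ₘ m))) c'
  have hNQle := N_le_card (derivative (pp (t ::ₘ m))) c'
  rw [hProots] at hNPle
  rw [hQroots] at hNQle
  -- derivative formulas
  have hPder : derivative (pp (s ::ₘ m)) = pp m + (X - C s) * derivative (pp m) := by
    rw [pp_cons, derivative_mul, derivative_X_sub_C, one_mul]
  have hQder : derivative (pp (t ::ₘ m)) = pp m + (X - C t) * derivative (pp m) := by
    rw [pp_cons, derivative_mul, derivative_X_sub_C, one_mul]
  have hPev : (derivative (pp (s ::ₘ m))).eval c'
      = (pp m).eval c' + (c' - s) * (derivative (pp m)).eval c' := by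
    rw [hPder]; simp [eval_add, eval_mul, eval_sub]
  have hQev : (derivative (pp (t ::ₘ m))).eval c'
      = (pp m).eval c' + (c' - t) * (derivative (pp m)).eval c' := by
    rw [hQder]; simp [eval_add, eval_mul, eval_sub]
  -- sign of R = pp m at c'
  have hpartm := filter_le_add_filter_gt m c'
  have hexpm : Multiset.card (m.filter fun x => c' < x) = Multiset.card m - r := by omega
  have hsR := pp_sign m c' hc'm
  rw [hexpm] at hsR
  rcases le_or_gt t c' with htc | htc
  · -- case A : s ≤ t ≤ c'
    have hsc : s ≤ c' := le_trans hst htc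
    have hcP : Multiset.card ((s ::ₘ m).filter fun x => x ≤ c') = r + 1 := by
      rw [Multiset.filter_cons_of_pos (p := fun x => x ≤ c') m hsc, Multiset.card_cons]
    have hcQ : Multiset.card ((t ::ₘ m).filter fun x => x ≤ c') = r + 1 := by
      rw [Multiset.filter_cons_of_pos (p := fun x => x ≤ c') m htc, Multiset.card_cons]
    rw [hcP] at hFP1 hFP2
    rw [hcQ] at hFQ1 hFQ2
    have hNP : N (derivative (pp (s ::ₘ m))) c' = r := by omega
    have hNQ : N (derivative (pp (t ::ₘ m))) c' = r + 1 := by omega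
    have hr1m : r + 1 ≤ Multiset.card m := by omega
    have hsP := sign_deriv_pp (s ::ₘ m) (by simp) c' hc'P
    have hsQ := sign_deriv_pp (t ::ₘ m) (by simp) c' hc'Q
    rw [hNP, hcards] at hsP
    rw [hNQ, hcardt] at hsQ
    have heP : Multiset.card m + 1 - 1 - r = Multiset.card m - r := by omega
    have heQ : Multiset.card m + 1 - 1 - (r + 1) = Multiset.card m - r - 1 := by omega
    rw [heP, hPev] at hsP
    rw [heQ, hQev] at hsQ
    have hflip : Multiset.card m - r = (Multiset.card m - r - 1) + 1 := by omega
    rw [hflip, pow_succ_neg_one] at hsR hsP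
    set e := (-1 : ℝ) ^ (Multiset.card m - r - 1) with he
    refine arith1 (-(e * (pp m).eval c')) (-(e * (derivative (pp m)).eval c'))
      (c' - s) (c' - t) hsR (by linarith) (by linarith) ?_ ?_
    · have hh : -(e * (pp m).eval c') + (c' - s) * -(e * (derivative (pp m)).eval c')
          = -(e * ((pp m).eval c' + (c' - s) * (derivative (pp m)).eval c')) := by ring
      rw [hh]
      exact hsP
    · have hh : -(e * (pp m).eval c') + (c' - t) * -(e * (derivative (pp m)).eval c')
          = -(e * ((pp m).eval c' + (c' - t) * (derivative (pp m)).eval c')) := by ring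
      rw [hh]
      linarith [hsQ]
  · rcases le_or_gt s c' with hsc | hsc
    · -- case B : s ≤ c' < t
      have hcP : Multiset.card ((s ::ₘ m).filter fun x => x ≤ c') = r + 1 := by
        rw [Multiset.filter_cons_of_pos (p := fun x => x ≤ c') m hsc, Multiset.card_cons]
      have hcQ : Multiset.card ((t ::ₘ m).filter fun x => x ≤ c') = r := by
        rw [Multiset.filter_cons_of_neg (p := fun x => x ≤ c') m (not_le.2 htc)]
      rw [hcP] at hFP1 hFP2
      rw [hcQ] at hFQ1 hFQ2
      omega
    · -- case C : c' < s ≤ t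
      have hcP : Multiset.card ((s ::ₘ m).filter fun x => x ≤ c') = r := by
        rw [Multiset.filter_cons_of_neg (p := fun x => x ≤ c') m (not_le.2 hsc)]
      have hcQ : Multiset.card ((t ::ₘ m).filter fun x => x ≤ c') = r := by
        rw [Multiset.filter_cons_of_neg (p := fun x => x ≤ c') m (not_le.2 htc)]
      rw [hcP] at hFP1 hFP2
      rw [hcQ] at hFQ1 hFQ2
      have hr1 : 1 ≤ r := by omega
      have hNP : N (derivative (pp (s ::ₘ m))) c' = r - 1 := by omega
      have hNQ : N (derivative (pp (t ::ₘ m))) c' = r := by omega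
      have hsP := sign_deriv_pp (s ::ₘ m) (by simp) c' hc'P
      have hsQ := sign_deriv_pp (t ::ₘ m) (by simp) c' hc'Q
      rw [hNP, hcards] at hsP
      rw [hNQ, hcardt] at hsQ
      have heP : Multiset.card m + 1 - 1 - (r - 1) = (Multiset.card m - r) + 1 := by omega
      have heQ : Multiset.card m + 1 - 1 - r = Multiset.card m - r := by omega
      rw [heP, hPev, pow_succ_neg_one] at hsP
      rw [heQ, hQev] at hsQ
      set e := (-1 : ℝ) ^ (Multiset.card m - r) with he
      refine arith2 (e * (pp m).eval c') (e * (derivative (pp m)).eval c')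
        (c' - s) (c' - t) hsR (by linarith) (by linarith) ?_ ?_
      · have hh : e * (pp m).eval c' + (c' - s) * (e * (derivative (pp m)).eval c')
            = e * ((pp m).eval c' + (c' - s) * (derivative (pp m)).eval c') := by ring
        rw [hh]
        linarith [hsP]
      · have hh : e * (pp m).eval c' + (c' - t) * (e * (derivative (pp m)).eval c')
            = e * ((pp m).eval c' + (c' - t) * (derivative (pp m)).eval c') := by ring
      
        rw [hh]
        exact hsQ

end
end RootsMono

namespace RootsMono
noncomputable section
open Classical

lemma add_cons' (s t : Multiset ℝ) (b : ℝ) : s + (b ::ₘ t) = b ::ₘ (s + t) := by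
  rw [add_comm, Multiset.cons_add, add_comm]

lemma core {l1 l2 : List ℝ} (h : List.Forall₂ (· ≤ ·) l1 l2) :
    ∀ (m : Multiset ℝ) (c : ℝ),
      N (derivative (pp (↑l2 + m))) c ≤ N (derivative (pp (↑l1 + m))) c := by
  induction h with
  | nil => intro m c; exact le_refl _
  | @cons a b as bs hab hf ih =>
    intro m c
    have e1 : ((↑(b :: bs) : Multiset ℝ) + m) = ↑bs + (b ::ₘ m) := by
      rw [← Multiset.cons_coe, Multiset.cons_add, add_cons']
    have e2 : ((↑as : Multiset ℝ) + (b ::ₘ m)) = b ::ₘ (↑as + m) := add_cons' _ _ _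
    have e3 : ((↑(a :: as) : Multiset ℝ) + m) = a ::ₘ (↑as + m) := by
      rw [← Multiset.cons_coe, Multiset.cons_add]
    calc N (derivative (pp (↑(b :: bs) + m))) c
        = N (derivative (pp (↑bs + (b ::ₘ m)))) c := by rw [e1]
      _ ≤ N (derivative (pp (↑as + (b ::ₘ m)))) c := ih (b ::ₘ m) c
      _ = N (derivative (pp (b ::ₘ (↑as + m)))) c := by rw [e2]
      _ ≤ N (derivative (pp (a ::ₘ (↑as + m)))) c := single_step _ a b c hab
      _ = N (derivative (pp (↑(a :: as) + m))) c := by rw [e3]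

lemma exists_forall2 : ∀ (n : ℕ) (A B : Multiset ℝ), Multiset.card A = n →
    Multiset.card B = n →
    (∀ c, Multiset.card (B.filter fun v => v ≤ c) ≤ Multiset.card (A.filter fun v => v ≤ c)) →
    ∃ l1 l2 : List ℝ, (↑l1 : Multiset ℝ) = A ∧ (↑l2 : Multiset ℝ) = B ∧
      List.Forall₂ (· ≤ ·) l1 l2 := by
  intro n
  induction n with
  | zero =>
    intro A B hA hB _
    exact ⟨[], [], by simpa using (Multiset.card_eq_zero.1 hA).symm,
      by simpa using (Multiset.card_eq_zero.1 hB).symm, List.Forall₂.nil⟩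
  | succ n ih =>
    intro A B hA hB hdom
    have hAne : A ≠ 0 := by intro h; rw [h] at hA; simp at hA
    have hBne : B ≠ 0 := by intro h; rw [h] at hB; simp at hB
    obtain ⟨a0, ha0⟩ := Multiset.exists_mem_of_ne_zero hAne
    obtain ⟨b0, hb0⟩ := Multiset.exists_mem_of_ne_zero hBne
    set a := A.toFinset.min' ⟨a0, Multiset.mem_toFinset.2 ha0⟩ with hadef
    set b := B.toFinset.min' ⟨b0, Multiset.mem_toFinset.2 hb0⟩ with hbdef
    have haA : a ∈ A := Multiset.mem_toFinset.1 (A.toFinset.min'_mem _)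
    have hbB : b ∈ B := Multiset.mem_toFinset.1 (B.toFinset.min'_mem _)
    have hamin : ∀ v ∈ A, a ≤ v := fun v hv =>
      A.toFinset.min'_le v (Multiset.mem_toFinset.2 hv)
    have hbmin : ∀ v ∈ B, b ≤ v := fun v hv =>
      B.toFinset.min'_le v (Multiset.mem_toFinset.2 hv)
    have hab : a ≤ b := by
      have h1 : 0 < Multiset.card (B.filter fun v => v ≤ b) := by
        rw [Multiset.card_pos_iff_exists_mem]
        exact ⟨b, Multiset.mem_filter.2 ⟨hbB, le_refl b⟩⟩
      have h2 := lt_of_lt_of_le h1 (hdom b)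
      rw [Multiset.card_pos_iff_exists_mem] at h2
      obtain ⟨v, hv⟩ := h2
      obtain ⟨hvA, hvb⟩ := Multiset.mem_filter.1 hv
      exact le_trans (hamin v hvA) hvb
    have hdom' : ∀ c, Multiset.card ((B.erase b).filter fun v => v ≤ c)
        ≤ Multiset.card ((A.erase a).filter fun v => v ≤ c) := by
      intro c
      rcases le_or_gt a c with hac | hac
      · have hAe : Multiset.card (A.filter fun v => v ≤ c)
            = Multiset.card ((A.erase a).filter fun v => v ≤ c) + 1 := by
          conv_lhs => rw [← Multiset.cons_erase haA]
          rw [Multiset.filter_cons_of_pos (p := fun v => v ≤ c) _ hac, Multiset.card_cons]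
        rcases le_or_gt b c with hbc | hbc
        · have hBe : Multiset.card (B.filter fun v => v ≤ c)
              = Multiset.card ((B.erase b).filter fun v => v ≤ c) + 1 := by
            conv_lhs => rw [← Multiset.cons_erase hbB]
            rw [Multiset.filter_cons_of_pos (p := fun v => v ≤ c) _ hbc, Multiset.card_cons]
          have := hdom c
          omega
        · have : ((B.erase b).filter fun v => v ≤ c) = 0 := by
            rw [Multiset.filter_eq_nil]
            intro v hv
            have hvB : v ∈ B := Multiset.mem_of_mem_erase hv
            have := hbmin v hvB
            intro hvc
            linarith
          rw [this]
          simp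
      · have : ((B.erase b).filter fun v => v ≤ c) = 0 := by
          rw [Multiset.filter_eq_nil]
          intro v hv
          have hvB : v ∈ B := Multiset.mem_of_mem_erase hv
          have := hbmin v hvB
          intro hvc
          linarith
        rw [this]
        simp
    have hcA : Multiset.card (A.erase a) = n := by
      rw [Multiset.card_erase_of_mem haA, hA]; rfl
    have hcB : Multiset.card (B.erase b) = n := by
      rw [Multiset.card_erase_of_mem hbB, hB]; rfl
    obtain ⟨l1, l2, hl1, hl2, hf⟩ := ih (A.erase a) (B.erase b) hcA hcB hdom'
    refine ⟨a :: l1, b :: l2, ?_, ?_, List.Forall₂.cons hab hf⟩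
    · rw [← Multiset.cons_coe, hl1, Multiset.cons_erase haA]
    · rw [← Multiset.cons_coe, hl2, Multiset.cons_erase hbB]

lemma dom_deriv (A B : Multiset ℝ) (hcard : Multiset.card A = Multiset.card B)
    (hdom : ∀ c, Multiset.card (B.filter fun v => v ≤ c)
      ≤ Multiset.card (A.filter fun v => v ≤ c)) :
    ∀ c, N (derivative (pp B)) c ≤ N (derivative (pp A)) c := by
  obtain ⟨l1, l2, h1, h2, hf⟩ := exists_forall2 (Multiset.card A) A B rfl hcard.symm hdom
  intro c
  have := core hf 0 c
  rw [add_zero, add_zero, h1, h2] at this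
  exact this

end
end RootsMono

namespace RootsMono
noncomputable section
open Classical

/-- `f` is a positive multiple of the monic polynomial with root multiset `A`. -/
def Hyp (f : ℝ[X]) (A : Multiset ℝ) : Prop := ∃ L : ℝ, 0 < L ∧ f = C L * pp A

lemma Hyp.ne_zero {f : ℝ[X]} {A : Multiset ℝ} (h : Hyp f A) : f ≠ 0 := by
  obtain ⟨L, hL, hf⟩ := h
  rw [hf]
  exact mul_ne_zero (by simpa using ne_of_gt hL) (pp_ne_zero A)

lemma Hyp.roots_eq {f : ℝ[X]} {A : Multiset ℝ} (h : Hyp f A) : f.roots = A := by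
  obtain ⟨L, hL, hf⟩ := h
  rw [hf, roots_C_mul _ (ne_of_gt hL), pp_roots]

lemma Hyp.deriv {f : ℝ[X]} {A : Multiset ℝ} (h : Hyp f A) (hA : 1 ≤ Multiset.card A) :
    Hyp (derivative f) (derivative (pp A)).roots := by
  obtain ⟨L, hL, hf⟩ := h
  refine ⟨L * (Multiset.card A : ℝ), mul_pos hL (by exact_mod_cast hA), ?_⟩
  rw [hf, derivative_C_mul]
  conv_lhs => rw [deriv_pp_eq A hA]
  rw [← mul_assoc, ← C_mul]

lemma findom {d : ℕ} (ξ η : Fin d → ℝ) (hξ : Monotone ξ) (hη : Monotone η)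
    (h : ∀ c, Multiset.card ((Finset.univ.val.map η).filter fun v => v ≤ c)
        ≤ Multiset.card ((Finset.univ.val.map ξ).filter fun v => v ≤ c))
    (j : Fin d) : ξ j ≤ η j := by
  by_contra hc
  push_neg at hc
  set c := η j with hcdef
  have hcount : ∀ f : Fin d → ℝ,
      Multiset.card ((Finset.univ.val.map f).filter fun v => v ≤ c)
        = (Finset.univ.filter fun i => f i ≤ c).card := by
    intro f
    rw [← Multiset.countP_eq_card_filter, Multiset.countP_map]
    rfl
  have h1 : Finset.Iic j ⊆ Finset.univ.filter fun i => η i ≤ c :=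
    fun i hi => Finset.mem_filter.2 ⟨Finset.mem_univ _, hη (Finset.mem_Iic.1 hi)⟩
  have h2 : (Finset.univ.filter fun i => ξ i ≤ c) ⊆ Finset.Iio j := by
    intro i hi
    obtain ⟨-, hic⟩ := Finset.mem_filter.1 hi
    rw [Finset.mem_Iio]
    by_contra hij
    exact absurd (le_trans (hξ (not_lt.1 hij)) hic) (not_le.2 hc)
  have h3 : (Finset.Iio j).card < (Finset.Iic j).card := by
    refine Finset.card_lt_card ⟨Finset.Iio_subset_Iic_self, fun hsub => ?_⟩
    exact absurd (Finset.mem_Iio.1 (hsub (Finset.mem_Iic.2 (le_refl j)))) (lt_irrefl j)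
  have := calc (Finset.Iic j).card ≤ (Finset.univ.filter fun i => η i ≤ c).card :=
      Finset.card_le_card h1
    _ = Multiset.card ((Finset.univ.val.map η).filter fun v => v ≤ c) := (hcount η).symm
    _ ≤ Multiset.card ((Finset.univ.val.map ξ).filter fun v => v ≤ c) := h c
    _ = (Finset.univ.filter fun i => ξ i ≤ c).card := hcount ξ
    _ ≤ (Finset.Iio j).card := Finset.card_le_card h2
  omega

end
end RootsMono

namespace RootsMono
noncomputable section
open Classical

lemma iter_lemma (n : ℕ) (P Q : ℝ[X]) (A0 B0 : Multiset ℝ)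
    (hA0 : Multiset.card A0 = n) (hB0 : Multiset.card B0 = n)
    (hHP : Hyp P A0) (hHQ : Hyp Q B0)
    (hdom0 : ∀ c, Multiset.card (B0.filter fun v => v ≤ c)
      ≤ Multiset.card (A0.filter fun v => v ≤ c)) :
    ∀ k : ℕ, k ≤ n - 1 →
      ∃ A B : Multiset ℝ, Multiset.card A = n - k ∧ Multiset.card B = n - k ∧
        Hyp (Polynomial.derivative^[k] P) A ∧ Hyp (Polynomial.derivative^[k] Q) B ∧
        (∀ c, Multiset.card (B.filter fun v => v ≤ c)
          ≤ Multiset.card (A.filter fun v => v ≤ c)) := by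
  intro k
  induction k with
  | zero =>
    intro _
    exact ⟨A0, B0, by omega, by omega, by simpa using hHP, by simpa using hHQ, hdom0⟩
  | succ k ih =>
    intro hk
    have hk' : k ≤ n - 1 := Nat.le_of_succ_le hk
    have hn1 : 1 ≤ n - k := by omega
    obtain ⟨A, B, hcA, hcB, hHA, hHB, hdom⟩ := ih hk'
    have h1 : 1 ≤ Multiset.card A := hcA ▸ hn1
    have h2 : 1 ≤ Multiset.card B := hcB ▸ hn1
    refine ⟨(derivative (pp A)).roots, (derivative (pp B)).roots, ?_, ?_, ?_, ?_, ?_⟩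
    · rw [(card_roots_deriv_pp A h1).1, hcA, Nat.sub_sub]
    · rw [(card_roots_deriv_pp B h2).1, hcB, Nat.sub_sub]
    · rw [Function.iterate_succ_apply']
      exact hHA.deriv h1
    · rw [Function.iterate_succ_apply']
      exact hHB.deriv h2
    · exact fun c => dom_deriv A B (hcA.trans hcB.symm) hdom c

end
end RootsMono

/-- Weak monotone dependence of the roots of `P^{(k)}` on the roots of `P`:
if `P` and `Q` are monic hyperbolic real polynomials of degree `n` with roots
`x 0 ≤ … ≤ x (n-1)` and `y 0 ≤ … ≤ y (n-1)` (listed in increasing order with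
multiplicity) satisfying `x i ≤ y i` for all `i`, then for every `1 ≤ k ≤ n - 1`
the increasingly ordered (with multiplicity) roots `ξ` of `P^{(k)}` and `η` of
`Q^{(k)}` satisfy `ξ j ≤ η j` for all `j`. -/
theorem roots_of_derivative_monotone_in_roots
    (n : ℕ) (x y : Fin n → ℝ) (hx : Monotone x) (hy : Monotone y)
    (P Q : Polynomial ℝ)
    (hP : P = ∏ i, (X - C (x i))) (hQ : Q = ∏ i, (X - C (y i)))
    (hle : ∀ i, x i ≤ y i) :
    ∀ k : ℕ, 1 ≤ k → k ≤ n - 1 →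
      ∀ ξ η : Fin (n - k) → ℝ, Monotone ξ → Monotone η →
        Polynomial.derivative^[k] P =
          C ((Polynomial.derivative^[k] P).leadingCoeff) * ∏ i, (X - C (ξ i)) →
        Polynomial.derivative^[k] Q =
          C ((Polynomial.derivative^[k] Q).leadingCoeff) * ∏ i, (X - C (η i)) →
        ∀ j : Fin (n - k), ξ j ≤ η j := by
  classical
  intro k hk1 hk2 ξ η hmξ hmη hfξ hfη j
  have hprod : ∀ (d : ℕ) (f : Fin d → ℝ),
      (∏ i, (X - C (f i))) = RootsMono.pp (Finset.univ.val.map f) := by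
    intro d f
    rw [Finset.prod_eq_multiset_prod, RootsMono.pp, Multiset.map_map]
    rfl
  have hcardu : ∀ (d : ℕ) (f : Fin d → ℝ),
      Multiset.card (Finset.univ.val.map f) = d := by
    intro d f
    rw [Multiset.card_map]
    exact Finset.card_fin d
  have hdom0 : ∀ c, Multiset.card ((Finset.univ.val.map y).filter fun v => v ≤ c)
      ≤ Multiset.card ((Finset.univ.val.map x).filter fun v => v ≤ c) := by
    intro c
    rw [← Multiset.countP_eq_card_filter, ← Multiset.countP_eq_card_filter,
      Multiset.countP_map, Multiset.countP_map]
    exact Multiset.card_le_card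
      (Multiset.monotone_filter_right _ fun i hi => le_trans (hle i) hi)
  obtain ⟨A, B, hcA, hcB, hHA, hHB, hdom⟩ :=
    RootsMono.iter_lemma n P Q (Finset.univ.val.map x) (Finset.univ.val.map y)
      (hcardu n x) (hcardu n y)
      ⟨1, one_pos, by rw [hP, hprod, C_1, one_mul]⟩
      ⟨1, one_pos, by rw [hQ, hprod, C_1, one_mul]⟩
      hdom0 k hk2
  rw [hprod] at hfξ hfη
  have hAe : A = Finset.univ.val.map ξ := by
    have h1 := hHA.roots_eq
    have hlc : (Polynomial.derivative^[k] P).leadingCoeff ≠ 0 :=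
      leadingCoeff_ne_zero.2 hHA.ne_zero
    have h2 : (Polynomial.derivative^[k] P).roots = Finset.univ.val.map ξ := by
      conv_lhs => rw [hfξ]
      rw [roots_C_mul _ hlc, RootsMono.pp_roots]
    rw [← h1, h2]
  have hBe : B = Finset.univ.val.map η := by
    have h1 := hHB.roots_eq
    have hlc : (Polynomial.derivative^[k] Q).leadingCoeff ≠ 0 :=
      leadingCoeff_ne_zero.2 hHB.ne_zero
    have h2 : (Polynomial.derivative^[k] Q).roots = Finset.univ.val.map η := by
      conv_lhs => rw [hfη]
      rw [roots_C_mul _ hlc, RootsMono.pp_roots]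
    rw [← h1, h2]
  refine RootsMono.findom ξ η hmξ hmη (fun c => ?_) j
  rw [← hAe, ← hBe]
  exact hdom c
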